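/- Let d ≥ 1, let A, B be real d×d matrices with b_k the k-th column of B, λ₀ ∈ ℝ^d, and for each k and λ let ν_k(λ) be a probability measure on ℝ with first moment J_k(λ) and second moment J_k²(λ). Assume: (i) there is K > 0 with |J_k(λ)| ≤ K and 0 ≤ J_k²(λ) ≤ K for all k and λ; (ii) there is γ < 0 such that for every λ ∈ ℝ^d, every eigenvalue of the symmetric matrix M(λ) + M(λ)ᵀ is at most γ, where M(λ) = A + B·J(λ) and J(λ) is the diagonal matrix with entries J_k(λ). Let f(λ) = λᵀλ/2, let w(λ) ∈ ℝ^d have components w_k(λ) = (‖b_k‖₂²/2)·J_k²(λ), and set (𝒜f)(λ) := λᵀ·M(λ)·λ + λᵀ·(w(λ) − A·λ₀). Then there exist constants C₁ > 0 and C₂ ∈ ℝ such that (𝒜f)(λ) ≤ C₂ − C₁·f(λ) for all λ ∈ ℝ^d. -/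

import Mathlib

open Matrix MeasureTheory


lemma rayleigh_upper' {d : ℕ} (S : Matrix (Fin d) (Fin d) ℝ) (hS : S.IsHermitian) (γ : ℝ)
    (h : ∀ i, hS.eigenvalues i ≤ γ) (x : Fin d → ℝ) :
    x ⬝ᵥ (S *ᵥ x) ≤ γ * (x ⬝ᵥ x) := by
  classical
  set U : Matrix (Fin d) (Fin d) ℝ := (hS.eigenvectorUnitary : Matrix (Fin d) (Fin d) ℝ) with hU
  have hUU : U * star U = 1 := (Matrix.mem_unitaryGroup_iff).mp hS.eigenvectorUnitary.2
  set y : Fin d → ℝ := star U *ᵥ x with hy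
  have hofReal : (RCLike.ofReal ∘ hS.eigenvalues : Fin d → ℝ) = hS.eigenvalues := rfl
  have hdot : ∀ z : Fin d → ℝ, x ⬝ᵥ (U *ᵥ z) = y ⬝ᵥ z := by
    intro z
    rw [dotProduct_mulVec, hy]
    congr 1
    rw [star_eq_conjTranspose, conjTranspose_eq_transpose_of_trivial, mulVec_transpose]
  have h1 : x ⬝ᵥ (S *ᵥ x) = y ⬝ᵥ (diagonal hS.eigenvalues *ᵥ y) := by
    conv_lhs => rw [hS.spectral_theorem, Unitary.conjStarAlgAut_apply]
    rw [hofReal, ← mulVec_mulVec, ← mulVec_mulVec, hdot]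
  have h2 : y ⬝ᵥ y = x ⬝ᵥ x := by
    have h3 : x ⬝ᵥ (U *ᵥ y) = y ⬝ᵥ y := hdot y
    nth_rewrite 1 [hy] at h3
    rw [mulVec_mulVec, hUU, one_mulVec] at h3
    exact h3.symm
  rw [h1, ← h2]
  simp only [dotProduct, mulVec_diagonal, Finset.mul_sum]
  apply Finset.sum_le_sum
  intro i _
  nlinarith [mul_self_nonneg (y i), h i]


/-- Foster–Lyapunov drift condition for the linear intensity model: if the jump-size
first and second moments are uniformly bounded and every eigenvalue of
`M(λ) + M(λ)ᵀ` (with `M(λ) = A + B J(λ)`) is at most some `γ < 0`, then the closed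
form of the generator applied to `f(λ) = λᵀλ/2`,
`(𝒜 f)(λ) = λᵀ M(λ) λ + λᵀ (w(λ) − A λ₀)`, satisfies
`(𝒜 f)(λ) ≤ C₂ − C₁ f(λ)` for some constants `C₁ > 0`, `C₂ ∈ ℝ`. -/
theorem stmt_15 {d : ℕ} (hd : 1 ≤ d) (A B : Matrix (Fin d) (Fin d) ℝ)
    (lam₀ : Fin d → ℝ)
    (ν : Fin d → (Fin d → ℝ) → Measure ℝ)
    (hprob : ∀ k lam, IsProbabilityMeasure (ν k lam))
    (hint1 : ∀ k lam, Integrable (fun x : ℝ => x) (ν k lam))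
    (hint2 : ∀ k lam, Integrable (fun x : ℝ => x ^ 2) (ν k lam))
    (J J2 : (Fin d → ℝ) → Fin d → ℝ)
    (hJ : ∀ lam k, J lam k = ∫ x, x ∂(ν k lam))
    (hJ2 : ∀ lam k, J2 lam k = ∫ x, x ^ 2 ∂(ν k lam))
    (K : ℝ) (hK : 0 < K)
    (hJbd : ∀ lam k, |J lam k| ≤ K)
    (hJ2bd : ∀ lam k, 0 ≤ J2 lam k ∧ J2 lam k ≤ K)
    (Mf : (Fin d → ℝ) → Matrix (Fin d) (Fin d) ℝ)
    (hM : ∀ lam, Mf lam = A + B * Matrix.diagonal (J lam))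
    (γ : ℝ) (hγneg : γ < 0)
    (hH : ∀ lam : Fin d → ℝ, (Mf lam + (Mf lam)ᵀ).IsHermitian)
    (hγ : ∀ (lam : Fin d → ℝ) (i : Fin d), (hH lam).eigenvalues i ≤ γ)
    (f : (Fin d → ℝ) → ℝ) (hf : ∀ lam : Fin d → ℝ, f lam = (lam ⬝ᵥ lam) / 2)
    (w : (Fin d → ℝ) → Fin d → ℝ)
    (hw : ∀ lam k, w lam k =
      (((fun i => B i k) ⬝ᵥ (fun i => B i k)) / 2) * J2 lam k)
    (Af : (Fin d → ℝ) → ℝ)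
    (hAf : ∀ lam : Fin d → ℝ,
      Af lam = lam ⬝ᵥ (Mf lam *ᵥ lam) + lam ⬝ᵥ (w lam - A *ᵥ lam₀)) :
    ∃ C₁ : ℝ, 0 < C₁ ∧ ∃ C₂ : ℝ, ∀ lam : Fin d → ℝ, Af lam ≤ C₂ - C₁ * f lam := by
  classical
  -- constants
  set c : Fin d → ℝ := fun k =>
    (((fun i => B i k) ⬝ᵥ (fun i => B i k)) / 2) * K + |(A *ᵥ lam₀) k| with hc
  set C : ℝ := ∑ k, c k with hCdef
  have hck : ∀ k, 0 ≤ c k := by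
    intro k
    have hbb : 0 ≤ ((fun i => B i k) ⬝ᵥ (fun i => B i k)) :=
      Finset.sum_nonneg fun i _ => mul_self_nonneg _
    have := abs_nonneg ((A *ᵥ lam₀) k)
    positivity
  have hC0 : 0 ≤ C := Finset.sum_nonneg fun k _ => hck k
  refine ⟨-γ/4, by linarith, 2 * C ^ 2 / (-γ), fun lam => ?_⟩
  set t : ℝ := Real.sqrt (lam ⬝ᵥ lam) with htdef
  have hdnn : 0 ≤ lam ⬝ᵥ lam := Finset.sum_nonneg fun i _ => mul_self_nonneg _
  have ht0 : 0 ≤ t := Real.sqrt_nonneg _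
  have ht2 : t ^ 2 = lam ⬝ᵥ lam := Real.sq_sqrt hdnn
  -- quadratic part
  have hquad : lam ⬝ᵥ (Mf lam *ᵥ lam) ≤ (γ / 2) * (lam ⬝ᵥ lam) := by
    have hsym : lam ⬝ᵥ ((Mf lam)ᵀ *ᵥ lam) = lam ⬝ᵥ (Mf lam *ᵥ lam) := by
      rw [mulVec_transpose, dotProduct_comm, ← dotProduct_mulVec]
    have hray := rayleigh_upper' _ (hH lam) γ (hγ lam) lam
    rw [add_mulVec, dotProduct_add, hsym] at hray
    linarith
  -- linear part
  have hlin : lam ⬝ᵥ (w lam - A *ᵥ lam₀) ≤ C * t := by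
    have hterm : ∀ k : Fin d, lam k * (w lam k - (A *ᵥ lam₀) k) ≤ c k * t := by
      intro k
      have hlamk : |lam k| ≤ t := by
        have h1 : lam k * lam k ≤ lam ⬝ᵥ lam :=
          Finset.single_le_sum (fun i _ => mul_self_nonneg (lam i)) (Finset.mem_univ k)
        calc |lam k| = Real.sqrt (lam k * lam k) := (Real.sqrt_mul_self_eq_abs _).symm
          _ ≤ t := Real.sqrt_le_sqrt h1
      have hwk : |w lam k - (A *ᵥ lam₀) k| ≤ c k := by
        have hbb : 0 ≤ ((fun i => B i k) ⬝ᵥ (fun i => B i k)) :=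
          Finset.sum_nonneg fun i _ => mul_self_nonneg _
        have h2 := hJ2bd lam k
        have hw1 : 0 ≤ w lam k := by rw [hw]; exact mul_nonneg (by linarith) h2.1
        have hw2 : w lam k ≤ (((fun i => B i k) ⬝ᵥ (fun i => B i k)) / 2) * K := by
          rw [hw]
          exact mul_le_mul_of_nonneg_left h2.2 (by linarith)
        rw [hc]
        have := abs_sub_abs_le_abs_sub (w lam k) ((A *ᵥ lam₀) k)
        have habs : |w lam k - (A *ᵥ lam₀) k| ≤ |w lam k| + |(A *ᵥ lam₀) k| :=
          abs_sub (w lam k) ((A *ᵥ lam₀) k)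
        rw [abs_of_nonneg hw1] at habs
        simp only
        linarith
      calc lam k * (w lam k - (A *ᵥ lam₀) k)
          ≤ |lam k * (w lam k - (A *ᵥ lam₀) k)| := le_abs_self _
        _ = |lam k| * |w lam k - (A *ᵥ lam₀) k| := abs_mul _ _
        _ ≤ t * c k := mul_le_mul hlamk hwk (abs_nonneg _) ht0
        _ = c k * t := mul_comm _ _
    calc lam ⬝ᵥ (w lam - A *ᵥ lam₀) = ∑ k, lam k * (w lam k - (A *ᵥ lam₀) k) := by
          simp [dotProduct, Pi.sub_apply]
      _ ≤ ∑ k, c k * t := Finset.sum_le_sum fun k _ => hterm k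
      _ = C * t := by rw [hCdef, Finset.sum_mul]
  rw [hAf, hf, ← ht2]
  have hγ' : 0 < -γ := by linarith
  have key : (γ / 2) * t ^ 2 + C * t ≤ 2 * C ^ 2 / (-γ) - (-γ/4) * (t ^ 2 / 2) := by
    rw [div_sub' (ne_of_gt hγ'), le_div_iff₀ hγ']
    nlinarith [sq_nonneg (3 * γ * t + 4 * C), sq_nonneg C, mul_nonneg hC0 ht0,
      mul_nonneg (mul_nonneg hC0 ht0) hγ'.le]
  calc lam ⬝ᵥ (Mf lam *ᵥ lam) + lam ⬝ᵥ (w lam - A *ᵥ lam₀)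
      ≤ (γ / 2) * t ^ 2 + C * t := by rw [ht2]; exact add_le_add hquad hlin
    _ ≤ 2 * C ^ 2 / (-γ) - (-γ/4) * (t ^ 2 / 2) := key
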